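/- Let m be a positive integer and let ω ∈ ℂ be an m-th root of unity with ω ≠ 1. Then 1/2 ≤ (1/(2·φ(m))) · ∑_{0 < j ≤ m, gcd(j,m) = 1} |1 − ω^j|² ≤ 2. -/

import Mathlib

open Finset Polynomial

private lemma sum_nthRoots_eq_zero' {n : ℕ} (hn : 2 ≤ n) :
    ∑ z ∈ nthRootsFinset n (1 : ℂ), z = 0 := by
  have hζ := Complex.isPrimitiveRoot_exp n (by omega)
  have h1 := Polynomial.X_pow_sub_one_eq_prod (R := ℂ) (by omega : 0 < n) hζ
  have h2 := Polynomial.prod_X_sub_C_coeff_card_pred (nthRootsFinset n (1 : ℂ)) (fun z => z)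
    (by rw [hζ.card_nthRootsFinset]; omega)
  rw [hζ.card_nthRootsFinset] at h2
  have h3 : (X ^ n - 1 : ℂ[X]).coeff (n - 1) = 0 := by
    rw [coeff_sub, coeff_X_pow, coeff_one]
    have h4 : ¬ (n - 1 = n) := by omega
    have h5 : ¬ (n - 1 = 0) := by omega
    simp [h4, h5]
  rw [h1] at h3
  rw [h2] at h3
  exact neg_eq_zero.mp h3

private lemma sum_primitiveRoots_eq_moebius' {n : ℕ} (hn : 0 < n) :
    ∑ z ∈ primitiveRoots n ℂ, z = (ArithmeticFunction.moebius n : ℂ) := by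
  have key : ∀ k > 0, ∑ d ∈ k.divisors, (∑ z ∈ primitiveRoots d ℂ, z)
      = (if k = 1 then (1:ℂ) else 0) := by
    intro k hk
    have hζ := Complex.isPrimitiveRoot_exp k (by omega)
    have hbu := IsPrimitiveRoot.nthRoots_one_eq_biUnion_primitiveRoots (R := ℂ) (n := k)
    have hsum : ∑ z ∈ nthRootsFinset k (1 : ℂ), z = ∑ d ∈ k.divisors, ∑ z ∈ primitiveRoots d ℂ, z := by
      rw [hbu]
      exact Finset.sum_biUnion (fun i hi j hj hij => IsPrimitiveRoot.disjoint hij)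
    rw [← hsum]
    by_cases h1 : k = 1
    · subst h1
      rw [if_pos rfl]
      have h2 : Polynomial.nthRootsFinset 1 (1 : ℂ) = {1} := by
        ext z
        simp [Polynomial.mem_nthRootsFinset Nat.one_pos]
      rw [h2]; simp
    · rw [if_neg h1, sum_nthRoots_eq_zero' (by omega)]
  have := (ArithmeticFunction.sum_eq_iff_sum_smul_moebius_eq
      (f := fun d => ∑ z ∈ primitiveRoots d ℂ, z)
      (g := fun k => if k = 1 then (1:ℂ) else 0)).mp key n hn
  rw [← this]
  rw [Finset.sum_eq_single (n, 1)]
  · simp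
  · rintro ⟨a, b⟩ hab hne
    have hb := (Nat.mem_divisorsAntidiagonal.mp hab)
    by_cases hb1 : b = 1
    · exfalso; apply hne; subst hb1; simp at hb; simp [hb.1]
    · simp [hb1]
  · intro h
    exfalso; apply h
    simp [Nat.mem_divisorsAntidiagonal]
    omega

private lemma sum_pow_units' {m : ℕ} (hm : 2 ≤ m) {ω : ℂ} (hω : ω ^ m = 1) (hω1 : ω ≠ 1) :
    ∃ c : ℕ, 0 < c ∧ c * (orderOf ω).totient = m.totient ∧ 2 ≤ orderOf ω ∧
      ∑ j ∈ (Finset.range m).filter (fun j => Nat.gcd j m = 1), ω ^ j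
        = (c : ℂ) * (ArithmeticFunction.moebius (orderOf ω) : ℂ) := by
  haveI : NeZero m := ⟨by omega⟩
  have hfin : IsOfFinOrder ω := isOfFinOrder_iff_pow_eq_one.mpr ⟨m, by omega, hω⟩
  set t := orderOf ω with htdef
  have ht0 : 0 < t := hfin.orderOf_pos
  have ht1 : t ≠ 1 := fun h => hω1 (orderOf_eq_one_iff.mp h)
  have ht2 : 2 ≤ t := by omega
  haveI : NeZero t := ⟨by omega⟩
  have htm : t ∣ m := orderOf_dvd_of_pow_eq_one hω
  have hωt : IsPrimitiveRoot ω t := IsPrimitiveRoot.orderOf ω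
  have stepA : ∑ j ∈ (Finset.range m).filter (fun j => Nat.gcd j m = 1), ω ^ j
      = ∑ u : (ZMod m)ˣ, ω ^ (ZMod.val (u : ZMod m)) := by
    symm
    refine Finset.sum_nbij (fun u => ZMod.val (u : ZMod m)) ?_ ?_ ?_ ?_
    · intro u _
      simp only [mem_filter, mem_range]
      exact ⟨ZMod.val_lt _, ZMod.val_coe_unit_coprime u⟩
    · intro u _ v _ h
      exact Units.ext (ZMod.val_injective m h)
    · intro j hj
      simp only [coe_filter, mem_range, Set.mem_setOf_eq] at hj
      refine ⟨ZMod.unitOfCoprime j hj.2, Finset.mem_coe.mpr (Finset.mem_univ _), ?_⟩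
      simp [ZMod.unitOfCoprime, ZMod.val_natCast, Nat.mod_eq_of_lt hj.1]
    · intro u _; rfl
  let π := ZMod.unitsMap htm
  have hπs : Function.Surjective π := ZMod.unitsMap_surjective htm
  have hval : ∀ u : (ZMod m)ˣ, ω ^ (ZMod.val (u : ZMod m)) = ω ^ (ZMod.val ((π u : (ZMod t)ˣ) : ZMod t)) := by
    intro u
    have hmod : (ZMod.val (u : ZMod m)) % t = (ZMod.val ((π u : (ZMod t)ˣ) : ZMod t)) % t := by
      have h1 : ((ZMod.val (u : ZMod m) : ZMod t)) = ((ZMod.val ((π u : (ZMod t)ˣ) : ZMod t) : ZMod t)) := by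
        rw [ZMod.natCast_val, ZMod.natCast_val, ZMod.cast_id]
        show ZMod.cast (u : ZMod m) = (π u : ZMod t)
        simp only [π, ZMod.unitsMap_def, Units.coe_map, MonoidHom.coe_coe, ZMod.castHom_apply]
      exact (ZMod.natCast_eq_natCast_iff _ _ _).mp h1
    rw [← pow_mod_orderOf ω (ZMod.val (u : ZMod m)), ← pow_mod_orderOf ω (ZMod.val ((π u : (ZMod t)ˣ) : ZMod t)), ← htdef, hmod]
  set c := Finset.card {u : (ZMod m)ˣ | π u = 1} with hcdef
  have hfib : ∀ v : (ZMod t)ˣ, (Finset.univ.filter (fun u => π u = v)).card = c := by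
    intro v
    exact MonoidHom.card_fiber_eq_of_mem_range π (Set.mem_range.mpr (hπs v)) (Set.mem_range.mpr (hπs 1))
  have stepB : ∑ u : (ZMod m)ˣ, ω ^ (ZMod.val (u : ZMod m))
      = (c : ℂ) * ∑ v : (ZMod t)ˣ, ω ^ (ZMod.val ((v : (ZMod t)ˣ) : ZMod t)) := by
    calc ∑ u : (ZMod m)ˣ, ω ^ (ZMod.val (u : ZMod m))
        = ∑ u : (ZMod m)ˣ, (fun v : (ZMod t)ˣ => ω ^ (ZMod.val (v : ZMod t))) (π u) := by
          exact Finset.sum_congr rfl (fun u _ => hval u)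
      _ = ∑ v ∈ Finset.univ.image π, (Finset.univ.filter fun u => π u = v).card • ω ^ (ZMod.val (v : ZMod t)) := Finset.sum_comp (fun v : (ZMod t)ˣ => ω ^ (ZMod.val (v : ZMod t))) (fun u => π u)
      _ = ∑ v : (ZMod t)ˣ, (c : ℂ) * ω ^ (ZMod.val (v : ZMod t)) := by
          rw [Finset.image_univ_of_surjective hπs]
          exact Finset.sum_congr rfl (fun v _ => by rw [hfib v, nsmul_eq_mul])
      _ = (c : ℂ) * ∑ v : (ZMod t)ˣ, ω ^ (ZMod.val (v : ZMod t)) := by rw [Finset.mul_sum]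
  have hcard : c * t.totient = m.totient := by
    have h1 : (Finset.univ : Finset (ZMod m)ˣ).card
        = ∑ v : (ZMod t)ˣ, (Finset.univ.filter fun u => π u = v).card :=
      Finset.card_eq_sum_card_fiberwise (fun u _ => Finset.mem_univ (π u))
    simp only [hfib] at h1
    rw [Finset.sum_const, Finset.card_univ, ZMod.card_units_eq_totient, smul_eq_mul] at h1
    rw [Finset.card_univ, ZMod.card_units_eq_totient] at h1
    rw [h1, mul_comm]
  have hc0 : 0 < c := by
    have h2 : 0 < m.totient := Nat.totient_pos.mpr (by omega)
    rcases Nat.eq_zero_or_pos c with h | h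
    · rw [h, zero_mul] at hcard; omega
    · exact h
  have stepC : ∑ v : (ZMod t)ˣ, ω ^ (ZMod.val ((v : (ZMod t)ˣ) : ZMod t))
      = (ArithmeticFunction.moebius t : ℂ) := by
    rw [← sum_primitiveRoots_eq_moebius' ht0]
    refine Finset.sum_nbij (fun v => ω ^ (ZMod.val ((v : (ZMod t)ˣ) : ZMod t))) ?_ ?_ ?_ ?_
    · intro v _
      rw [mem_primitiveRoots ht0]
      exact hωt.pow_of_coprime _ (ZMod.val_coe_unit_coprime v)
    · intro u _ v _ h
      have := hωt.pow_inj (ZMod.val_lt _) (ZMod.val_lt _) h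
      exact Units.ext (ZMod.val_injective t this)
    · intro z hz
      rw [Finset.mem_coe, mem_primitiveRoots ht0] at hz
      obtain ⟨i, hi, hicop, hzi⟩ := (hωt.isPrimitiveRoot_iff).mp hz
      refine ⟨ZMod.unitOfCoprime i hicop, Finset.mem_coe.mpr (Finset.mem_univ _), ?_⟩
      simp only [ZMod.coe_unitOfCoprime, ZMod.val_natCast, Nat.mod_eq_of_lt hi]
      exact hzi
    · intro v _; rfl
  exact ⟨c, hc0, hcard, ht2, by rw [stepA, stepB, stepC]⟩

theorem stmt_1 (m : ℕ) (hm : 0 < m) (ω : ℂ) (hω : ω ^ m = 1) (hω1 : ω ≠ 1) :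
    1 / 2 ≤ (1 / (2 * (Nat.totient m : ℝ))) *
        ∑ j ∈ (Finset.Ioc 0 m).filter (fun j => Nat.gcd j m = 1),
          ‖1 - ω ^ j‖ ^ 2 ∧
      (1 / (2 * (Nat.totient m : ℝ))) *
        ∑ j ∈ (Finset.Ioc 0 m).filter (fun j => Nat.gcd j m = 1),
          ‖1 - ω ^ j‖ ^ 2 ≤ 2 := by
  have hm2 : 2 ≤ m := by
    by_contra h
    push_neg at h
    interval_cases m
    · exact hω1 (by simpa using hω)
  -- convert Ioc-filter to range-filter
  have hset : (Finset.Ioc 0 m).filter (fun j => Nat.gcd j m = 1)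
      = (Finset.range m).filter (fun j => Nat.gcd j m = 1) := by
    ext j
    simp only [mem_filter, mem_Ioc, mem_range]
    constructor
    · rintro ⟨⟨h0, hle⟩, hg⟩
      refine ⟨lt_of_le_of_ne hle ?_, hg⟩
      rintro rfl
      rw [Nat.gcd_self] at hg
      omega
    · rintro ⟨hlt, hg⟩
      refine ⟨⟨?_, le_of_lt hlt⟩, hg⟩
      rcases Nat.eq_zero_or_pos j with rfl | h
      · rw [Nat.gcd_zero_left] at hg; omega
      · exact h
  have hcardfilter : ((Finset.range m).filter (fun j => Nat.gcd j m = 1)).card = m.totient := by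
    rw [Nat.totient]
    congr 1
    apply Finset.filter_congr
    intro j _
    simp [Nat.Coprime, Nat.gcd_comm]
  obtain ⟨c, hc0, hcard, ht2, hsum⟩ := sum_pow_units' hm2 hω hω1
  set t := orderOf ω with htdef
  -- |ω| = 1
  have hωabs : ‖ω‖ = 1 := by
    exact Complex.norm_eq_one_of_pow_eq_one hω (by omega)
  have hterm : ∀ j : ℕ, ‖1 - ω ^ j‖ ^ 2 = 2 - 2 * (ω ^ j).re := by
    intro j
    have hz : ‖ω ^ j‖ = 1 := by rw [norm_pow, hωabs, one_pow]
    have hns : (ω ^ j).re ^ 2 + (ω ^ j).im ^ 2 = 1 := by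
      have := Complex.sq_norm (ω ^ j)
      rw [hz] at this
      rw [Complex.normSq_apply] at this
      nlinarith [this]
    rw [Complex.sq_norm, Complex.normSq_apply]
    simp only [Complex.sub_re, Complex.sub_im, Complex.one_re, Complex.one_im]
    nlinarith [hns]
  have hSS : ∑ j ∈ (Finset.range m).filter (fun j => Nat.gcd j m = 1),
      ‖1 - ω ^ j‖ ^ 2
      = 2 * (m.totient : ℝ) - 2 * ((c : ℝ) * ((ArithmeticFunction.moebius t : ℤ) : ℝ)) := by
    calc ∑ j ∈ (Finset.range m).filter (fun j => Nat.gcd j m = 1), ‖1 - ω ^ j‖ ^ 2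
        = ∑ j ∈ (Finset.range m).filter (fun j => Nat.gcd j m = 1), (2 - 2 * (ω ^ j).re) :=
          Finset.sum_congr rfl (fun j _ => hterm j)
      _ = 2 * (m.totient : ℝ) - 2 * (∑ j ∈ (Finset.range m).filter (fun j => Nat.gcd j m = 1), ω ^ j).re := by
          rw [Finset.sum_sub_distrib, Finset.sum_const, hcardfilter, ← Finset.mul_sum, Complex.re_sum]
          push_cast
          ring
      _ = 2 * (m.totient : ℝ) - 2 * ((c : ℝ) * ((ArithmeticFunction.moebius t : ℤ) : ℝ)) := by
          rw [hsum]
          norm_num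
  -- moebius bounds
  have hmuvals : ArithmeticFunction.moebius t = 0 ∨ ArithmeticFunction.moebius t = 1
      ∨ ArithmeticFunction.moebius t = -1 := by
    by_cases hsq : Squarefree t
    · rw [ArithmeticFunction.moebius_apply_of_squarefree hsq]
      rcases Nat.even_or_odd (ArithmeticFunction.cardFactors t) with he | ho
      · right; left; exact he.neg_one_pow
      · right; right; exact ho.neg_one_pow
    · left; exact ArithmeticFunction.moebius_eq_zero_of_not_squarefree hsq
  have hpt0 : 0 < t.totient := Nat.totient_pos.mpr (by omega)
  have hmu2 : 2 * (ArithmeticFunction.moebius t : ℤ) ≤ (t.totient : ℤ) := by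
    rcases hmuvals with h | h | h
    · rw [h]; omega
    · rw [h]
      have hpt1 : t.totient ≠ 1 := by
        intro h1
        rcases Nat.totient_eq_one_iff.mp h1 with h2 | h2
        · omega
        · rw [h2, ArithmeticFunction.moebius_apply_prime Nat.prime_two] at h
          omega
      omega
    · rw [h]; omega
  have hmulow : (-1 : ℤ) ≤ ArithmeticFunction.moebius t := by
    rcases hmuvals with h | h | h <;> omega
  -- final arithmetic
  rw [hset, hSS]
  set mu : ℝ := ((ArithmeticFunction.moebius t : ℤ) : ℝ) with hmudef
  have hmu2R : 2 * mu ≤ (t.totient : ℝ) := by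
    rw [hmudef]
    exact_mod_cast hmu2
  have hmulowR : (-1 : ℝ) ≤ mu := by rw [hmudef]; exact_mod_cast hmulow
  have hcardR : (c : ℝ) * (t.totient : ℝ) = (m.totient : ℝ) := by exact_mod_cast hcard
  have hcR : (0 : ℝ) < c := by exact_mod_cast hc0
  have hptR : (1 : ℝ) ≤ (t.totient : ℝ) := by exact_mod_cast hpt0
  have hφm : (0 : ℝ) < (m.totient : ℝ) := by
    have : 0 < m.totient := Nat.totient_pos.mpr (by omega)
    exact_mod_cast this
  constructor
  · rw [div_le_iff₀ (by positivity) , show (1 / (2 * (m.totient : ℝ))) * (2 * (m.totient : ℝ) - 2 * ((c : ℝ) * mu)) * 2 = (2 * (m.totient : ℝ) - 2 * ((c : ℝ) * mu)) / (m.totient : ℝ) by field_simp, le_div_iff₀ hφm]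
    nlinarith [mul_le_mul_of_nonneg_left hmu2R (le_of_lt hcR)]
  · rw [show (1 / (2 * (m.totient : ℝ))) * (2 * (m.totient : ℝ) - 2 * ((c : ℝ) * mu)) = ((m.totient : ℝ) - (c : ℝ) * mu) / (m.totient : ℝ) by field_simp, div_le_iff₀ hφm]
    nlinarith [mul_le_mul_of_nonneg_left hmulowR (le_of_lt hcR)]
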